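/- Let N = [[N₁₁, N₁₂], [N₁₂ᵀ, N₂₂]] be a real symmetric block matrix with N₁₁ (size m₁×m₁) symmetric positive definite and N₂₂ (size m₂×m₂) symmetric negative definite, and set Φ = N₂₂ − N₁₂ᵀ N₁₁⁻¹ N₁₂. Let L₁ be a real n×m₁ matrix, L₂ a real n×m₂ matrix, and L = [L₁, L₂] the n×(m₁+m₂) matrix obtained by placing L₁ and L₂ side by side. Then L N⁻¹ Lᵀ − L₁ N₁₁⁻¹ L₁ᵀ = (N₁₂ᵀ N₁₁⁻¹ L₁ᵀ − L₂ᵀ)ᵀ Φ⁻¹ (N₁₂ᵀ N₁₁⁻¹ L₁ᵀ − L₂ᵀ), and this matrix is negative semidefinite. -/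

import Mathlib

open Matrix

/-- Difference of quadratic forms in the inverse of a block matrix and in the
inverse of its `(1,1)` block, expressed through the Schur complement; this
difference is negative semidefinite. -/
theorem block_quad_form_diff {m₁ m₂ n : ℕ}
    (N₁₁ : Matrix (Fin m₁) (Fin m₁) ℝ) (N₁₂ : Matrix (Fin m₁) (Fin m₂) ℝ)
    (N₂₂ : Matrix (Fin m₂) (Fin m₂) ℝ)
    (hN₁₁ : N₁₁.PosDef) (hN₂₂ : (-N₂₂).PosDef)
    (Φ : Matrix (Fin m₂) (Fin m₂) ℝ) (hΦdef : Φ = N₂₂ - N₁₂ᵀ * N₁₁⁻¹ * N₁₂)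
    (L₁ : Matrix (Fin n) (Fin m₁) ℝ) (L₂ : Matrix (Fin n) (Fin m₂) ℝ)
    (L : Matrix (Fin n) (Fin m₁ ⊕ Fin m₂) ℝ) (hLdef : L = Matrix.fromCols L₁ L₂)
    (N : Matrix (Fin m₁ ⊕ Fin m₂) (Fin m₁ ⊕ Fin m₂) ℝ)
    (hNdef : N = Matrix.fromBlocks N₁₁ N₁₂ N₁₂ᵀ N₂₂) :
    L * N⁻¹ * Lᵀ - L₁ * N₁₁⁻¹ * L₁ᵀ =
        (N₁₂ᵀ * N₁₁⁻¹ * L₁ᵀ - L₂ᵀ)ᵀ * Φ⁻¹ * (N₁₂ᵀ * N₁₁⁻¹ * L₁ᵀ - L₂ᵀ) ∧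
      (-(L * N⁻¹ * Lᵀ - L₁ * N₁₁⁻¹ * L₁ᵀ)).PosSemidef := by
  subst hLdef hNdef
  have hN₁₁inv : Invertible N₁₁ := hN₁₁.isUnit.invertible
  have hinv : N₁₁⁻¹.PosDef := hN₁₁.inv
  have hΦneg : (-Φ).PosDef := by
    rw [hΦdef]
    have h : -(N₂₂ - N₁₂ᵀ * N₁₁⁻¹ * N₁₂) = (-N₂₂) + N₁₂ᵀ * N₁₁⁻¹ * N₁₂ := by abel
    rw [h]
    refine hN₂₂.add_posSemidef ?_
    have := hinv.posSemidef.conjTranspose_mul_mul_same (m := Fin m₂) N₁₂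
    simpa using this
  have hΦunit : IsUnit Φ := by simpa using hΦneg.isUnit.neg
  have hΦinv : Invertible Φ := hΦunit.invertible
  have hii : ⅟N₁₁ = N₁₁⁻¹ := invOf_eq_nonsing_inv N₁₁
  have hΦi : Invertible (N₂₂ - N₁₂ᵀ * ⅟N₁₁ * N₁₂) := by
    rw [hii, ← hΦdef]; exact hΦinv
  have hsc : ⅟(N₂₂ - N₁₂ᵀ * ⅟N₁₁ * N₁₂) = Φ⁻¹ := by
    rw [invOf_eq_nonsing_inv, hii, ← hΦdef]
  have hNinvb : Invertible (fromBlocks N₁₁ N₁₂ N₁₂ᵀ N₂₂) :=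
    fromBlocks₁₁Invertible N₁₁ N₁₂ N₁₂ᵀ N₂₂
  have hNblock : (fromBlocks N₁₁ N₁₂ N₁₂ᵀ N₂₂)⁻¹ = fromBlocks
      (N₁₁⁻¹ + N₁₁⁻¹ * N₁₂ * Φ⁻¹ * N₁₂ᵀ * N₁₁⁻¹) (-(N₁₁⁻¹ * N₁₂ * Φ⁻¹))
      (-(Φ⁻¹ * N₁₂ᵀ * N₁₁⁻¹)) (Φ⁻¹) := by
    rw [← invOf_eq_nonsing_inv, invOf_fromBlocks₁₁_eq N₁₁ N₁₂ N₁₂ᵀ N₂₂, hsc, hii]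
  have hN₁₁sym : N₁₁⁻¹ᵀ = N₁₁⁻¹ := by
    rw [transpose_nonsing_inv]
    congr 1
    exact hN₁₁.isHermitian.eq
  have key : fromCols L₁ L₂ * (fromBlocks N₁₁ N₁₂ N₁₂ᵀ N₂₂)⁻¹ * (fromCols L₁ L₂)ᵀ
      - L₁ * N₁₁⁻¹ * L₁ᵀ =
      (N₁₂ᵀ * N₁₁⁻¹ * L₁ᵀ - L₂ᵀ)ᵀ * Φ⁻¹ * (N₁₂ᵀ * N₁₁⁻¹ * L₁ᵀ - L₂ᵀ) := by
    rw [hNblock, transpose_fromCols, fromCols_mul_fromBlocks, fromCols_mul_fromRows]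
    simp only [Matrix.transpose_sub, Matrix.transpose_mul, Matrix.transpose_transpose, hN₁₁sym]
    simp only [Matrix.sub_mul, Matrix.mul_sub, Matrix.add_mul, Matrix.mul_add,
      Matrix.neg_mul, Matrix.mul_neg, Matrix.mul_assoc]
    abel
  refine ⟨key, ?_⟩
  rw [key]
  have hΦninv : (-Φ)⁻¹ = -(Φ⁻¹) := by
    refine inv_eq_right_inv ?_
    rw [Matrix.neg_mul, Matrix.mul_neg, neg_neg, Matrix.mul_nonsing_inv _ ((Matrix.isUnit_iff_isUnit_det Φ).mp hΦunit)]
  have hpsd : ((-Φ)⁻¹).PosSemidef := hΦneg.inv.posSemidef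
  have := hpsd.conjTranspose_mul_mul_same (N₁₂ᵀ * N₁₁⁻¹ * L₁ᵀ - L₂ᵀ)
  rw [hΦninv] at this
  have heq : -((N₁₂ᵀ * N₁₁⁻¹ * L₁ᵀ - L₂ᵀ)ᵀ * Φ⁻¹ * (N₁₂ᵀ * N₁₁⁻¹ * L₁ᵀ - L₂ᵀ)) =
      (N₁₂ᵀ * N₁₁⁻¹ * L₁ᵀ - L₂ᵀ)ᴴ * (-(Φ⁻¹)) * (N₁₂ᵀ * N₁₁⁻¹ * L₁ᵀ - L₂ᵀ) := by
    simp [Matrix.mul_neg, Matrix.neg_mul, conjTranspose_eq_transpose_of_trivial]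
  rw [heq]
  exact this
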